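/- arXiv:2310.13519 — 6 statements merged into one kernel-verified Lean document; each statement's English description precedes it below -/
import Mathlib

section
/- Let P be the 3×3 real matrix with rows (1, −1/2, 0), (−1/2, 1, 0), (0, 0, 3), and let R be the 3×3 real matrix with rows (√3/2, 0, 0), (−1/2, 1, 0), (0, 0, √3). Then P = RᵀR, R is invertible, and consequently P is positive definite. -/
open Matrix

/-- The matrix `P` of the von Mises / approximate Ilyushin criteria factors as
`P = RᵀR` with `R` invertible, hence `P` is positive definite. -/
theorem vonMises_P_factorization_posDef
    (P R : Matrix (Fin 3) (Fin 3) ℝ)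
    (hP : P = !![1, -1/2, 0; -1/2, 1, 0; 0, 0, 3])
    (hR : R = !![Real.sqrt 3 / 2, 0, 0; -1/2, 1, 0; 0, 0, Real.sqrt 3]) :
    P = Rᵀ * R ∧ IsUnit R ∧ P.PosDef := by
  have h3 : Real.sqrt 3 * Real.sqrt 3 = 3 := Real.mul_self_sqrt (by norm_num)
  have hfact : P = Rᵀ * R := by
    subst hP hR
    ext i j
    fin_cases i <;> fin_cases j <;>
      simp [Matrix.mul_apply, Fin.sum_univ_three, Matrix.transpose_apply, Matrix.vecHead, Matrix.vecTail] <;> nlinarith [h3]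
  have hunit : IsUnit R := by
    rw [Matrix.isUnit_iff_isUnit_det, isUnit_iff_ne_zero, hR, Matrix.det_fin_three]
    norm_num [Matrix.vecHead, Matrix.vecTail, Matrix.cons_val_two]
  refine ⟨hfact, hunit, ?_⟩
  have hinj : Function.Injective (R.mulVec) := Matrix.mulVec_injective_iff_isUnit.2 hunit
  rw [Matrix.posDef_iff_dotProduct_mulVec]
  constructor
  · rw [hfact]
    simpa using Matrix.isHermitian_conjTranspose_mul_self R
  · intro x hx
    rw [hfact, ← Matrix.mulVec_mulVec, Matrix.dotProduct_mulVec, Matrix.vecMul_transpose]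
    have hRx : R.mulVec x ≠ 0 := fun h => hx (hinj (by simpa using h))
    have := dotProduct_self_eq_zero (v := R.mulVec x)
    have hnn : 0 ≤ dotProduct (R.mulVec x) (R.mulVec x) :=
      Finset.sum_nonneg fun i _ => mul_self_nonneg _
    rcases hnn.lt_or_eq with h | h
    · simpa [star_trivial] using h
    · exact absurd (this.1 h.symm) hRx
end

section
/- Let σ₀ > 0. For every (ė₁, ė₂) ∈ ℝ², the supremum of σ₁ė₁ + σ₂ė₂ over the set {(σ₁, σ₂) ∈ ℝ² : max(|σ₂ − σ₁|, |σ₁|, |σ₂|) ≤ σ₀} equals σ₀·max(|ė₁|, |ė₂|, |ė₁ + ė₂|), and the supremum is attained. -/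
/-- Dissipation power density of the plane-stress Tresca criterion in principal
strain rates: the supremum of `σ₁ė₁ + σ₂ė₂` over the Tresca hexagon is attained
and equals `σ₀·max(|ė₁|, |ė₂|, |ė₁ + ė₂|)`. -/
theorem tresca_dissipation_principal (σ0 : ℝ) (hσ0 : 0 < σ0) (e1 e2 : ℝ) :
    IsGreatest
      {r : ℝ | ∃ σ : ℝ × ℝ, max (max |σ.2 - σ.1| |σ.1|) |σ.2| ≤ σ0 ∧
        r = σ.1 * e1 + σ.2 * e2}
      (σ0 * max (max |e1| |e2|) |e1 + e2|) := by
  have h0 := hσ0.le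
  constructor
  · -- membership
    rcases le_total 0 e1 with h1 | h1 <;> rcases le_total 0 e2 with h2 | h2
    · refine ⟨(σ0, σ0), ?_, ?_⟩
      · simp [abs_of_nonneg h0, h0]
      · have : max (max |e1| |e2|) |e1 + e2| = e1 + e2 := by
          rw [abs_of_nonneg h1, abs_of_nonneg h2, abs_of_nonneg (by linarith)]
          rw [max_eq_right]; · exact max_le (by linarith) (by linarith)
        rw [this]; ring
    · -- e1 ≥ 0 ≥ e2
      rcases le_total (-e2) e1 with h3 | h3
      · refine ⟨(σ0, 0), ?_, ?_⟩
        · simp [abs_of_nonneg h0, abs_of_nonpos (neg_nonpos.mpr h0), h0]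
        · have : max (max |e1| |e2|) |e1 + e2| = e1 := by
            rw [abs_of_nonneg h1, abs_of_nonpos h2, abs_of_nonneg (by linarith),
              max_eq_left (by linarith : -e2 ≤ e1), max_eq_left (by linarith : e1 + e2 ≤ e1)]
          rw [this]; ring
      · refine ⟨(0, -σ0), ?_, ?_⟩
        · simp [abs_of_nonneg h0, abs_of_nonpos (neg_nonpos.mpr h0), h0]
        · have : max (max |e1| |e2|) |e1 + e2| = -e2 := by
            rw [abs_of_nonneg h1, abs_of_nonpos h2, abs_of_nonpos (by linarith),
              max_eq_right h3, max_eq_left (by linarith : -(e1 + e2) ≤ -e2)]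
          rw [this]; ring
    · -- e1 ≤ 0 ≤ e2
      rcases le_total (-e1) e2 with h3 | h3
      · refine ⟨(0, σ0), ?_, ?_⟩
        · simp [abs_of_nonneg h0, h0]
        · have : max (max |e1| |e2|) |e1 + e2| = e2 := by
            rw [abs_of_nonpos h1, abs_of_nonneg h2, abs_of_nonneg (by linarith),
              max_eq_right h3, max_eq_left (by linarith : e1 + e2 ≤ e2)]
          rw [this]; ring
      · refine ⟨(-σ0, 0), ?_, ?_⟩
        · simp [abs_of_nonneg h0, abs_of_nonpos (neg_nonpos.mpr h0), h0]
        · have : max (max |e1| |e2|) |e1 + e2| = -e1 := by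
            rw [abs_of_nonpos h1, abs_of_nonneg h2, abs_of_nonpos (by linarith),
              max_eq_left (by linarith : e2 ≤ -e1), max_eq_left (by linarith : -(e1 + e2) ≤ -e1)]
          rw [this]; ring
    · refine ⟨(-σ0, -σ0), ?_, ?_⟩
      · simp [abs_of_nonpos (neg_nonpos.mpr h0), h0]
      · have : max (max |e1| |e2|) |e1 + e2| = -(e1 + e2) := by
          rw [abs_of_nonpos h1, abs_of_nonpos h2, abs_of_nonpos (by linarith)]
          rw [max_eq_right]; exact max_le (by linarith) (by linarith)
        rw [this]; ring
  · rintro r ⟨⟨s1, s2⟩, hc, rfl⟩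
    simp only [max_le_iff] at hc
    obtain ⟨⟨hd, h1⟩, h2⟩ := hc
    rw [abs_le] at hd h1 h2
    set M := max (max |e1| |e2|) |e1 + e2| with hM
    have hMe1 : e1 ≤ M := le_trans (le_abs_self e1) (le_max_of_le_left (le_max_left _ _))
    have hMe1' : -e1 ≤ M := le_trans (neg_le_abs e1) (le_max_of_le_left (le_max_left _ _))
    have hMe2 : e2 ≤ M := le_trans (le_abs_self e2) (le_max_of_le_left (le_max_right _ _))
    have hMe2' : -e2 ≤ M := le_trans (neg_le_abs e2) (le_max_of_le_left (le_max_right _ _))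
    have hMs : e1 + e2 ≤ M := le_trans (le_abs_self _) (le_max_right _ _)
    have hMs' : -(e1 + e2) ≤ M := le_trans (neg_le_abs _) (le_max_right _ _)
    rcases le_total 0 e1 with p1 | p1 <;> rcases le_total 0 e2 with p2 | p2
    · nlinarith [mul_le_mul_of_nonneg_right hd.2 p2, mul_le_mul_of_nonneg_right h1.2 p1]
    · rcases le_total 0 (e1 + e2) with p3 | p3
      · nlinarith [mul_le_mul_of_nonneg_left hd.1 (neg_nonneg.mpr p2)]
      · nlinarith [mul_le_mul_of_nonneg_left hd.2 (by linarith : (0:ℝ) ≤ e1)]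
      -- decompositions handled by nlinarith
    · rcases le_total 0 (e1 + e2) with p3 | p3
      · nlinarith [mul_le_mul_of_nonneg_left hd.2 (neg_nonneg.mpr p1)]
      · nlinarith [mul_le_mul_of_nonneg_left hd.1 (by linarith : (0:ℝ) ≤ e2)]
    · nlinarith [mul_le_mul_of_nonneg_right hd.1 (neg_nonneg.mpr p2), mul_le_mul_of_nonneg_right h1.1 (neg_nonneg.mpr p1)]
end

section
/- Let σ₀ > 0 and ε_x, ε_y, γ ∈ ℝ. Set A = (ε_x − ε_y)² + γ², ė₁ = ((ε_x + ε_y) − √A)/2 and ė₂ = ((ε_x + ε_y) + √A)/2 (the eigenvalues of the matrix with rows (ε_x, γ/2), (γ/2, ε_y)). Then the supremum of σ₁ė₁ + σ₂ė₂ over the set {(σ₁, σ₂) ∈ ℝ² : max(|σ₂ − σ₁|, |σ₁|, |σ₂|) ≤ σ₀} equals σ₀·max( |(ε_x + ε_y − √A)/2|, |(ε_x + ε_y + √A)/2|, |ε_x + ε_y| ). -/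
lemma tresca_key (σ0 M σ1 σ2 e1 e2 : ℝ)
    (h1 : σ1 ≤ σ0) (h2 : -σ0 ≤ σ1) (h3 : σ2 ≤ σ0) (h4 : -σ0 ≤ σ2)
    (h5 : σ2 - σ1 ≤ σ0) (h6 : σ1 - σ2 ≤ σ0)
    (m1 : e1 ≤ M) (m2 : -e1 ≤ M) (m3 : e2 ≤ M) (m4 : -e2 ≤ M)
    (m5 : e1 + e2 ≤ M) (m6 : -(e1 + e2) ≤ M) :
    σ1 * e1 + σ2 * e2 ≤ σ0 * M := by
  rcases le_total 0 e1 with he1 | he1 <;>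
  rcases le_total 0 e2 with he2 | he2 <;>
  rcases le_total 0 σ1 with hs1 | hs1 <;>
  rcases le_total 0 σ2 with hs2 | hs2 <;>
  nlinarith

/-- Cartesian form of the plane-stress Tresca dissipation power density:
with principal strain rates `ė₁, ė₂` obtained from `ε_x, ε_y, γ`, the
supremum of `σ₁ė₁ + σ₂ė₂` over the Tresca hexagon equals
`σ₀·max(|(ε_x+ε_y−√A)/2|, |(ε_x+ε_y+√A)/2|, |ε_x+ε_y|)`. -/
theorem tresca_dissipation_cartesian (σ0 : ℝ) (hσ0 : 0 < σ0)
    (εx εy γ A e1 e2 : ℝ)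
    (hA : A = (εx - εy) ^ 2 + γ ^ 2)
    (he1 : e1 = ((εx + εy) - Real.sqrt A) / 2)
    (he2 : e2 = ((εx + εy) + Real.sqrt A) / 2) :
    IsLUB
      {r : ℝ | ∃ σ : ℝ × ℝ, max (max |σ.2 - σ.1| |σ.1|) |σ.2| ≤ σ0 ∧
        r = σ.1 * e1 + σ.2 * e2}
      (σ0 * max (max |(εx + εy - Real.sqrt A) / 2| |(εx + εy + Real.sqrt A) / 2|)
        |εx + εy|) := by
  have hE1 : (εx + εy - Real.sqrt A) / 2 = e1 := by rw [he1]
  have hE2 : (εx + εy + Real.sqrt A) / 2 = e2 := by rw [he2]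
  have hsum : εx + εy = e1 + e2 := by rw [he1, he2]; ring
  rw [hE1, hE2, hsum]
  apply IsGreatest.isLUB
  constructor
  · -- membership: the value is attained
    rcases max_cases (max |e1| |e2|) |e1 + e2| with ⟨hm, _⟩ | ⟨hm, _⟩
    · rcases max_cases |e1| |e2| with ⟨hm', _⟩ | ⟨hm', _⟩
      · -- max is |e1|
        refine ⟨(if 0 ≤ e1 then σ0 else -σ0, 0), ?_, ?_⟩
        · split_ifs <;> simp [abs_of_pos hσ0, abs_of_neg (neg_neg_of_pos hσ0), hσ0.le] <;>
            simp [abs_neg, abs_of_pos hσ0, hσ0.le]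
        · rw [hm, hm']
          split_ifs with h
          · rw [abs_of_nonneg h]; ring
          · rw [abs_of_neg (lt_of_not_ge h)]; ring
      · -- max is |e2|
        refine ⟨(0, if 0 ≤ e2 then σ0 else -σ0), ?_, ?_⟩
        · split_ifs <;> simp [abs_of_pos hσ0, abs_of_neg (neg_neg_of_pos hσ0), hσ0.le] <;>
            simp [abs_neg, abs_of_pos hσ0, hσ0.le]
        · rw [hm, hm']
          split_ifs with h
          · rw [abs_of_nonneg h]; ring
          · rw [abs_of_neg (lt_of_not_ge h)]; ring
    · -- max is |e1 + e2|
      refine ⟨(if 0 ≤ e1 + e2 then σ0 else -σ0, if 0 ≤ e1 + e2 then σ0 else -σ0), ?_, ?_⟩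
      · split_ifs <;> simp [abs_of_pos hσ0, abs_of_neg (neg_neg_of_pos hσ0), hσ0.le] <;>
          simp [abs_neg, abs_of_pos hσ0, hσ0.le]
      · rw [hm]
        split_ifs with h
        · rw [abs_of_nonneg h]; ring
        · rw [abs_of_neg (lt_of_not_ge h)]; ring
  · -- upper bound
    rintro r ⟨⟨σ1, σ2⟩, hc, rfl⟩
    simp only [max_le_iff, abs_le] at hc
    set M : ℝ := max (max |e1| |e2|) |e1 + e2| with hMdef
    have hM1 : |e1| ≤ M := le_trans (le_max_left _ _) (le_max_left _ _)
    have hM2 : |e2| ≤ M := le_trans (le_max_right _ _) (le_max_left _ _)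
    have hM3 : |e1 + e2| ≤ M := le_max_right _ _
    exact tresca_key σ0 M σ1 σ2 e1 e2 hc.1.2.2 hc.1.2.1 hc.2.2 hc.2.1
      hc.1.1.2 (by linarith [hc.1.1.1])
      (le_trans (le_abs_self _) hM1) (le_trans (neg_le_abs _) hM1)
      (le_trans (le_abs_self _) hM2) (le_trans (neg_le_abs _) hM2)
      (le_trans (le_abs_self _) hM3) (le_trans (neg_le_abs _) hM3)
end

section
/- Let f_tx, f_cx, f_ty, f_cy, f_vxy > 0 and define χ = 1 + (f_tx − f_cx)²/(4 f_tx f_cx) + (f_ty − f_cy)²/(2 f_ty f_cy). For (σ_x, σ_y, σ_z, τ) ∈ ℝ⁴ define f(σ_x, σ_y, σ_z, τ) = σ_x(1/f_tx − 1/f_cx) + (σ_y + σ_z)(1/f_ty − 1/f_cy) + σ_x²/(f_tx f_cx) + (σ_y² + σ_z²)/(f_ty f_cy) + τ²/f_vxy². Then for all (ε_x, ε_y, γ) ∈ ℝ³, the supremum of σ_x ε_x + σ_y ε_y + τ γ over the set {(σ_x, σ_y, σ_z, τ) ∈ ℝ⁴ : f(σ_x, σ_y, σ_z, τ) ≤ 1}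 is attained and equals ((f_tx − f_cx)/2)·ε_x + ((f_ty − f_cy)/2)·ε_y + √( χ·( f_tx f_cx ε_x² + f_ty f_cy ε_y² + f_vxy² γ² ) ). -/
/-- Dissipation power density of the plane-strain Tsai-Wu failure criterion:
the supremum of `σ_x ε_x + σ_y ε_y + τ γ` over `{f ≤ 1}` is attained and has
the stated closed form. -/
theorem tsaiWu_dissipation
    (ftx fcx fty fcy fvxy : ℝ)
    (hftx : 0 < ftx) (hfcx : 0 < fcx) (hfty : 0 < fty) (hfcy : 0 < fcy)
    (hfvxy : 0 < fvxy)
    (χ : ℝ)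
    (hχ : χ = 1 + (ftx - fcx) ^ 2 / (4 * ftx * fcx)
            + (fty - fcy) ^ 2 / (2 * fty * fcy))
    (f : ℝ → ℝ → ℝ → ℝ → ℝ)
    (hf : ∀ σx σy σz τ, f σx σy σz τ
        = σx * (1 / ftx - 1 / fcx) + (σy + σz) * (1 / fty - 1 / fcy)
          + σx ^ 2 / (ftx * fcx) + (σy ^ 2 + σz ^ 2) / (fty * fcy)
          + τ ^ 2 / fvxy ^ 2)
    (εx εy γ : ℝ) :
    IsGreatest
      {r : ℝ | ∃ σx σy σz τ : ℝ, f σx σy σz τ ≤ 1 ∧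
        r = σx * εx + σy * εy + τ * γ}
      ((ftx - fcx) / 2 * εx + (fty - fcy) / 2 * εy
        + Real.sqrt (χ * (ftx * fcx * εx ^ 2 + fty * fcy * εy ^ 2
            + fvxy ^ 2 * γ ^ 2))) := by
  have hA : (0:ℝ) < ftx * fcx := by positivity
  have hB : (0:ℝ) < fty * fcy := by positivity
  have hC : (0:ℝ) < fvxy ^ 2 := by positivity
  set a : ℝ := (ftx - fcx) / 2 with ha
  set b : ℝ := (fty - fcy) / 2 with hb
  set A : ℝ := ftx * fcx with hAdef
  set B : ℝ := fty * fcy with hBdef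
  set C : ℝ := fvxy ^ 2 with hCdef
  set S : ℝ := A * εx ^ 2 + B * εy ^ 2 + C * γ ^ 2 with hS
  have hχ2 : χ = 1 + a ^ 2 / A + 2 * b ^ 2 / B := by
    rw [hχ, ha, hb, hAdef, hBdef]
    field_simp
    ring
  have hχ1 : 1 ≤ χ := by
    have h1 : 0 ≤ a ^ 2 / A := by positivity
    have h2 : 0 ≤ 2 * b ^ 2 / B := by positivity
    linarith [hχ2.ge, hχ2.le]
  have hSnn : 0 ≤ S := by rw [hS]; positivity
  have hfform : ∀ σx σy σz τ : ℝ, f σx σy σz τ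
      = (σx - a) ^ 2 / A + ((σy - b) ^ 2 + (σz - b) ^ 2) / B + τ ^ 2 / C
        - (χ - 1) := by
    intro σx σy σz τ
    rw [hf, hχ2, ha, hb, hAdef, hBdef, hCdef]
    field_simp
    ring
  constructor
  · -- membership: the supremum is attained
    by_cases hS0 : S = 0
    · refine ⟨a, b, b, 0, ?_, ?_⟩
      · rw [hfform]
        simp only [sub_self]
        norm_num
        linarith
      · rw [hS0]
        simp
    · have hSpos : 0 < S := lt_of_le_of_ne hSnn (Ne.symm hS0)
      set t : ℝ := Real.sqrt (χ / S) with htdef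
      have ht2 : t ^ 2 = χ / S := Real.sq_sqrt (by positivity)
      have ht2S : t ^ 2 * S = χ := by
        rw [ht2, div_mul_cancel₀ _ hS0]
      have hsqrt : Real.sqrt (χ * S) = t * S := by
        have h1 : χ * S = (χ / S) * S ^ 2 := by field_simp
        rw [h1, Real.sqrt_mul (by positivity) (S ^ 2), Real.sqrt_sq hSnn, htdef]
      refine ⟨a + t * A * εx, b + t * B * εy, b, t * C * γ, ?_, ?_⟩
      · rw [hfform]
        have hkey : (a + t * A * εx - a) ^ 2 / A
            + ((b + t * B * εy - b) ^ 2 + (b - b) ^ 2) / B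
            + (t * C * γ) ^ 2 / C = t ^ 2 * S := by
          rw [hS]
          field_simp
          ring
        rw [hkey, ht2S]
        linarith
      · rw [hsqrt, hS]
        ring
  · -- upper bound
    rintro r ⟨σx, σy, σz, τ, hle, rfl⟩
    set u : ℝ := σx - a with hu
    set v : ℝ := σy - b with hv
    set w : ℝ := σz - b with hw
    rw [hfform] at hle
    have h1 : u ^ 2 / A + (v ^ 2 + w ^ 2) / B + τ ^ 2 / C ≤ χ := by
      have : (v ^ 2 + w ^ 2) / B = v ^ 2 / B + w ^ 2 / B := by ring
      linarith [hle]
    have h3 : B * C * u ^ 2 + A * C * v ^ 2 + A * B * τ ^ 2 ≤ A * B * C * χ := by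
      have habc : (0:ℝ) < A * B * C := by positivity
      have h2 := mul_le_mul_of_nonneg_left h1 habc.le
      have he : A * B * C * (u ^ 2 / A + (v ^ 2 + w ^ 2) / B + τ ^ 2 / C)
          = B * C * u ^ 2 + A * C * v ^ 2 + A * C * w ^ 2 + A * B * τ ^ 2 := by
        field_simp
        ring
      have hw2 : 0 ≤ A * C * w ^ 2 := by positivity
      rw [he] at h2
      linarith
    have h4 : (u * εx + v * εy + τ * γ) ^ 2 * (A * B * C)
        ≤ (B * C * u ^ 2 + A * C * v ^ 2 + A * B * τ ^ 2) * S := by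
      have hid : (B * C * u ^ 2 + A * C * v ^ 2 + A * B * τ ^ 2)
            * (A * εx ^ 2 + B * εy ^ 2 + C * γ ^ 2)
          - (u * εx + v * εy + τ * γ) ^ 2 * (A * B * C)
          = C * (B * u * εy - A * v * εx) ^ 2 + B * (C * u * γ - A * τ * εx) ^ 2
            + A * (C * v * γ - B * τ * εy) ^ 2 := by ring
      have hq1 : 0 ≤ C * (B * u * εy - A * v * εx) ^ 2 := by positivity
      have hq2 : 0 ≤ B * (C * u * γ - A * τ * εx) ^ 2 := by positivity
      have hq3 : 0 ≤ A * (C * v * γ - B * τ * εy) ^ 2 := by positivity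
      rw [hS]
      linarith
    have h5 : (u * εx + v * εy + τ * γ) ^ 2 ≤ χ * S := by
      have habc : (0:ℝ) < A * B * C := by positivity
      have h6 := mul_le_mul_of_nonneg_right h3 hSnn
      have hre : A * B * C * χ * S = (χ * S) * (A * B * C) := by ring
      have h7 : (u * εx + v * εy + τ * γ) ^ 2 * (A * B * C)
          ≤ (χ * S) * (A * B * C) := by linarith
      exact le_of_mul_le_mul_right h7 habc
    have h8 : u * εx + v * εy + τ * γ ≤ Real.sqrt (χ * S) := by
      calc u * εx + v * εy + τ * γ ≤ |u * εx + v * εy + τ * γ| := le_abs_self _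
        _ = Real.sqrt ((u * εx + v * εy + τ * γ) ^ 2) :=
            (Real.sqrt_sq_eq_abs _).symm
        _ ≤ Real.sqrt (χ * S) := Real.sqrt_le_sqrt h5
    have heq : σx * εx + σy * εy + τ * γ
        = a * εx + b * εy + (u * εx + v * εy + τ * γ) := by
      rw [hu, hv]; ring
    linarith [h8, heq.le, heq.ge]
end

section
/- Let P be the 3×3 real matrix with rows (1, −1/2, 0), (−1/2, 1, 0), (0, 0, 3), let R be the 3×3 real matrix with rows (√3/2, 0, 0), (−1/2, 1, 0), (0, 0, √3), and write R^{-T} = (Rᵀ)⁻¹. Let n_p, m_p > 0 and fix i ∈ {1, 2}; set α = (−1)^i/(2√3) and, for m, n ∈ ℝ³, f_i(m, n) = nᵀPn/n_p² + mᵀPm/m_p² + ((−1)^i/√3)·mᵀPn/(n_p m_p). Let T be the 6×6 block matrix with blocks T₁₁ = 0, T₁₂ = n_p·R^{-T}, T₂₁ = (m_p/√(1 − α²))·R^{-T}, T₂₂ = −(α n_p/√(1 − α²))·R^{-T}. Then for all (κ, ε) ∈ ℝ³ × ℝ³, the supremum of mᵀκ + nᵀε over the set {(m, n) ∈ ℝ³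 × ℝ³ : f_i(m, n) ≤ 1} is attained and equals ‖T·(κ, ε)‖, the Euclidean norm in ℝ⁶ of T applied to the vector (κ, ε). -/
open Matrix

lemma euc_norm_dot {n : Type*} [Fintype n] (v : n → ℝ) :
    ‖(WithLp.equiv 2 (n → ℝ)).symm v‖ = Real.sqrt (v ⬝ᵥ v) := by
  rw [EuclideanSpace.norm_eq]; congr 1; simp [dotProduct, sq_abs, sq]

lemma dot_cs' {n : Type*} [Fintype n] (a z : n → ℝ) :
    a ⬝ᵥ z ≤ Real.sqrt (a ⬝ᵥ a) * Real.sqrt (z ⬝ᵥ z) := by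
  have h := real_inner_le_norm ((WithLp.equiv 2 (n → ℝ)).symm a) ((WithLp.equiv 2 (n → ℝ)).symm z)
  rw [euc_norm_dot, euc_norm_dot] at h
  simpa [PiLp.inner_apply, RCLike.inner_apply, dotProduct, mul_comm] using h

lemma dot_self_nonneg' {n : Type*} [Fintype n] (z : n → ℝ) : 0 ≤ z ⬝ᵥ z :=
  Finset.sum_nonneg fun i _ => mul_self_nonneg (z i)

lemma greatest_aux {ι : Type*} [Fintype ι] [DecidableEq ι]
    (A T : Matrix ι ι ℝ) (hAT : Aᵀ * T = 1) (hTA : T * Aᵀ = 1)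
    (y : ι → ℝ) :
    IsGreatest {r : ℝ | ∃ x : ι → ℝ, (A.mulVec x) ⬝ᵥ (A.mulVec x) ≤ 1 ∧ r = x ⬝ᵥ y}
      (Real.sqrt (T.mulVec y ⬝ᵥ T.mulVec y)) := by
  set z := T.mulVec y with hz
  have hATt : A * Tᵀ = 1 := by
    have := congrArg Matrix.transpose hTA
    simpa [Matrix.transpose_mul] using this
  have hkey : ∀ x : ι → ℝ, x ⬝ᵥ y = (A.mulVec x) ⬝ᵥ z := by
    intro x
    have : y = Aᵀ.mulVec z := by
      rw [hz, Matrix.mulVec_mulVec, hAT, Matrix.one_mulVec]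
    conv_lhs => rw [this]
    rw [Matrix.dotProduct_mulVec, Matrix.vecMul_transpose]
  constructor
  · by_cases h0 : z = 0
    · refine ⟨0, ?_, ?_⟩ <;> simp [h0, Matrix.mulVec_zero]
    · have hzz : 0 < z ⬝ᵥ z :=
        lt_of_le_of_ne (dot_self_nonneg' z)
          (Ne.symm ((dotProduct_self_eq_zero).not.mpr h0))
      set N := Real.sqrt (z ⬝ᵥ z) with hN
      have hN0 : 0 < N := Real.sqrt_pos.mpr hzz
      have hNsq : N ^ 2 = z ⬝ᵥ z := Real.sq_sqrt hzz.le
      have hA : A.mulVec ((1/N) • Tᵀ.mulVec z) = (1/N) • z := by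
        rw [Matrix.mulVec_smul, Matrix.mulVec_mulVec, hATt, Matrix.one_mulVec]
      refine ⟨(1/N) • Tᵀ.mulVec z, ?_, ?_⟩
      · rw [hA, smul_dotProduct, dotProduct_smul, smul_eq_mul, smul_eq_mul,
          ← hNsq]
        rw [div_mul_eq_mul_div, div_mul_eq_mul_div, one_mul, div_div]
        rw [div_le_one (by positivity)]
        ring_nf
        exact le_refl _
      · rw [hkey, hA, smul_dotProduct, smul_eq_mul, ← hNsq]
        field_simp
  · rintro r ⟨x, hx, rfl⟩
    rw [hkey]
    calc (A.mulVec x) ⬝ᵥ z ≤ Real.sqrt ((A.mulVec x) ⬝ᵥ (A.mulVec x)) * Real.sqrt (z ⬝ᵥ z) :=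
          dot_cs' _ _
      _ ≤ 1 * Real.sqrt (z ⬝ᵥ z) := by
          gcongr
          exact Real.sqrt_le_one.mpr hx
      _ = Real.sqrt (z ⬝ᵥ z) := one_mul _

/-- Single-branch dissipation power area-density of the approximate Ilyushin
criterion: the supremum of `mᵀκ + nᵀε` over `{f_i ≤ 1}` is attained and equals
`‖T·(κ, ε)‖` with `T = R̃ᵢ^{-T}` the stated 6×6 block matrix. -/
theorem ilyushin_branch_dissipation
    (P R : Matrix (Fin 3) (Fin 3) ℝ)
    (hP : P = !![1, -1/2, 0; -1/2, 1, 0; 0, 0, 3])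
    (hR : R = !![Real.sqrt 3 / 2, 0, 0; -1/2, 1, 0; 0, 0, Real.sqrt 3])
    (np mp : ℝ) (hnp : 0 < np) (hmp : 0 < mp)
    (i : ℕ) (hi : i = 1 ∨ i = 2)
    (α : ℝ) (hα : α = (-1 : ℝ) ^ i / (2 * Real.sqrt 3))
    (f : (Fin 3 → ℝ) → (Fin 3 → ℝ) → ℝ)
    (hf : ∀ m n, f m n
        = n ⬝ᵥ P.mulVec n / np ^ 2 + m ⬝ᵥ P.mulVec m / mp ^ 2
          + ((-1 : ℝ) ^ i / Real.sqrt 3) * (m ⬝ᵥ P.mulVec n) / (np * mp))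
    (T : Matrix (Fin 3 ⊕ Fin 3) (Fin 3 ⊕ Fin 3) ℝ)
    (hT : T = Matrix.fromBlocks
        (0 : Matrix (Fin 3) (Fin 3) ℝ) (np • (Rᵀ)⁻¹)
        ((mp / Real.sqrt (1 - α ^ 2)) • (Rᵀ)⁻¹)
        (-((α * np / Real.sqrt (1 - α ^ 2)) • (Rᵀ)⁻¹)))
    (κ ε : Fin 3 → ℝ) :
    IsGreatest
      {r : ℝ | ∃ m n : Fin 3 → ℝ, f m n ≤ 1 ∧ r = m ⬝ᵥ κ + n ⬝ᵥ ε}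
      ‖(WithLp.equiv 2 ((Fin 3 ⊕ Fin 3) → ℝ)).symm
          (T.mulVec (Sum.elim κ ε))‖ := by
  have hs0 : (0:ℝ) < Real.sqrt 3 := Real.sqrt_pos.mpr (by norm_num)
  have hs2 : Real.sqrt 3 ^ 2 = 3 := Real.sq_sqrt (by norm_num)
  set s : ℝ := Real.sqrt 3 with hsdef
  -- sign
  set σ : ℝ := (-1 : ℝ) ^ i with hσdef
  have hσ2 : σ ^ 2 = 1 := by
    rcases hi with h | h <;> simp [hσdef, h]
  have hα2 : α ^ 2 = 1 / 12 := by
    rw [hα]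
    rw [div_pow, mul_pow, hs2, hσ2]
    norm_num
  have h1α : 1 - α ^ 2 = 11 / 12 := by rw [hα2]; norm_num
  set c : ℝ := Real.sqrt (1 - α ^ 2) with hcdef
  have hc0 : (0:ℝ) < c := Real.sqrt_pos.mpr (by rw [h1α]; norm_num)
  have hc2 : c ^ 2 = 1 - α ^ 2 := Real.sq_sqrt (by rw [h1α]; norm_num)
  -- inverse of Rᵀ
  set S : Matrix (Fin 3) (Fin 3) ℝ := !![2/s, 1/s, 0; 0, 1, 0; 0, 0, 1/s] with hSdef
  have hRT : Rᵀ = !![s / 2, -1/2, 0; 0, 1, 0; 0, 0, s] := by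
    ext a b
    fin_cases a <;> fin_cases b <;> simp [hR, Matrix.vecHead, Matrix.vecTail, hsdef]
  have hRS : Rᵀ * S = 1 := by
    rw [hRT, hSdef]
    ext a b
    fin_cases a <;> fin_cases b <;>
      simp [Matrix.mul_apply, Fin.sum_univ_three, Matrix.one_apply, Matrix.vecHead,
        Matrix.vecTail] <;>
      (try field_simp) <;> (try ring)
  have hSR : S * Rᵀ = 1 := mul_eq_one_comm.mp hRS
  have hRinv : (Rᵀ)⁻¹ = S := Matrix.inv_eq_right_inv hRS
  -- quadratic form of P via R
  have hPR : ∀ x y : Fin 3 → ℝ, x ⬝ᵥ P.mulVec y = (R.mulVec x) ⬝ᵥ (R.mulVec y) := by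
    intro x y
    rw [hP, hR]
    simp [Matrix.mulVec, dotProduct, Fin.sum_univ_three]
    linear_combination (-(x 0 * y 0) / 4 - x 2 * y 2) * hs2
  -- the matrix A with AᵀA = quadratic form of f, and T = A^{-T}
  set A : Matrix (Fin 3 ⊕ Fin 3) (Fin 3 ⊕ Fin 3) ℝ :=
    Matrix.fromBlocks ((α/mp) • R) ((1/np) • R) ((c/mp) • R) 0 with hAdef
  have hAt : Aᵀ = Matrix.fromBlocks ((α/mp) • Rᵀ) ((c/mp) • Rᵀ) ((1/np) • Rᵀ) 0 := by
    rw [hAdef, Matrix.fromBlocks_transpose]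
    simp [Matrix.transpose_smul]
  have hT' : T = Matrix.fromBlocks 0 (np • S) ((mp/c) • S) (-((α * np/c) • S)) := by
    rw [hT, hRinv, hcdef]
  have hAT : Aᵀ * T = 1 := by
    rw [hAt, hT', Matrix.fromBlocks_multiply, ← Matrix.fromBlocks_one,
      Matrix.fromBlocks_inj]
    refine ⟨?_, ?_, ?_, ?_⟩
    · rw [Matrix.mul_zero, zero_add, Matrix.smul_mul, Matrix.mul_smul, hRS, smul_smul]
      have h1 : c/mp * (mp/c) = (1:ℝ) := by field_simp
      rw [h1, one_smul]
    · rw [Matrix.smul_mul, Matrix.mul_smul, hRS, Matrix.mul_neg, Matrix.smul_mul,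
        Matrix.mul_smul, hRS, smul_smul, smul_smul, ← sub_eq_add_neg, ← sub_smul]
      have h1 : α/mp * np - c/mp * (α * np/c) = (0:ℝ) := by field_simp; ring
      rw [h1, zero_smul]
    · rw [Matrix.mul_zero, zero_add, Matrix.zero_mul]
    · rw [Matrix.smul_mul, Matrix.mul_smul, hRS, smul_smul, Matrix.zero_mul, add_zero]
      have h1 : (1:ℝ)/np * np = (1:ℝ) := by field_simp
      rw [h1, one_smul]
  have hTA : T * Aᵀ = 1 := by
    rw [hAt, hT', Matrix.fromBlocks_multiply, ← Matrix.fromBlocks_one,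
      Matrix.fromBlocks_inj]
    refine ⟨?_, ?_, ?_, ?_⟩
    · rw [Matrix.zero_mul, zero_add, Matrix.smul_mul, Matrix.mul_smul, hSR, smul_smul]
      have h1 : np * ((1:ℝ)/np) = (1:ℝ) := by field_simp
      rw [h1, one_smul]
    · rw [Matrix.zero_mul, zero_add, Matrix.mul_zero]
    · rw [Matrix.smul_mul, Matrix.mul_smul, hSR, Matrix.neg_mul, Matrix.smul_mul,
        Matrix.mul_smul, hSR, smul_smul, smul_smul, ← sub_eq_add_neg, ← sub_smul]
      have h1 : mp/c * (α/mp) - α * np/c * ((1:ℝ)/np) = (0:ℝ) := by field_simp; ring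
      rw [h1, zero_smul]
    · rw [Matrix.smul_mul, Matrix.mul_smul, hSR, smul_smul, Matrix.neg_mul,
        Matrix.smul_mul, Matrix.mul_zero, smul_zero, neg_zero, add_zero]
      have h1 : mp/c * (c/mp) = (1:ℝ) := by field_simp
      rw [h1, one_smul]
  -- f equals the quadratic form of A
  have hfA : ∀ m n : Fin 3 → ℝ,
      f m n = (A.mulVec (Sum.elim m n)) ⬝ᵥ (A.mulVec (Sum.elim m n)) := by
    intro m n
    rw [hf]
    rw [hAdef, Matrix.fromBlocks_mulVec]
    simp only [Sum.elim_comp_inl, Sum.elim_comp_inr]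
    rw [Matrix.smul_mulVec, Matrix.smul_mulVec, Matrix.smul_mulVec,
      Matrix.zero_mulVec, add_zero]
    rw [sumElim_dotProduct_sumElim]
    set u := R.mulVec m
    set v := R.mulVec n
    rw [hPR, hPR, hPR]
    rw [add_dotProduct, dotProduct_add, dotProduct_add]
    simp only [smul_dotProduct, dotProduct_smul, smul_eq_mul]
    have hcomm : v ⬝ᵥ u = u ⬝ᵥ v := dotProduct_comm v u
    rw [hcomm]
    have hσs : σ = 2 * α * s := by
      rw [hα]; field_simp
    rw [hσs]
    have hc2' : c * c = 1 - α * α := by nlinarith [hc2]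
    set p := u ⬝ᵥ u with hp
    set q := v ⬝ᵥ v with hq
    set r := u ⬝ᵥ v with hr
    field_simp
    linear_combination (-(np ^ 2 * p)) * hc2'
  -- rewrite set and norm, apply the general lemma
  have hset : {r : ℝ | ∃ m n : Fin 3 → ℝ, f m n ≤ 1 ∧ r = m ⬝ᵥ κ + n ⬝ᵥ ε}
      = {r : ℝ | ∃ x : Fin 3 ⊕ Fin 3 → ℝ,
          (A.mulVec x) ⬝ᵥ (A.mulVec x) ≤ 1 ∧ r = x ⬝ᵥ Sum.elim κ ε} := by
    ext r
    constructor
    · rintro ⟨m, n, h1, rfl⟩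
      exact ⟨Sum.elim m n, by rwa [← hfA], by rw [sumElim_dotProduct_sumElim]⟩
    · rintro ⟨x, h1, rfl⟩
      refine ⟨x ∘ Sum.inl, x ∘ Sum.inr, ?_, ?_⟩
      · rw [hfA, Sum.elim_comp_inl_inr]; exact h1
      · rw [← sumElim_dotProduct_sumElim, Sum.elim_comp_inl_inr]
  rw [hset, euc_norm_dot]
  exact greatest_aux A T hAT hTA (Sum.elim κ ε)
end

section
/- Let P be the 3×3 real matrix with rows (1, −1/2, 0), (−1/2, 1, 0), (0, 0, 3), let R be the 3×3 real matrix with rows (√3/2, 0, 0), (−1/2, 1, 0), (0, 0, √3), and write R^{-T} = (Rᵀ)⁻¹. Let n_p, m_p > 0 and for i ∈ {1, 2} set αᵢ = (−1)^i/(2√3), f_i(m, n) = nᵀPn/n_p² + mᵀPm/m_p² + ((−1)^i/√3)·mᵀPn/(n_p m_p) for m, n ∈ ℝ³, and let Tᵢ be the 6×6 block matrix with blocks (Tᵢ)₁₁ = 0, (Tᵢ)₁₂ = n_p·R^{-T}, (Tᵢ)₂₁ = (m_p/√(1 − αᵢ²))·R^{-T}, (Tᵢ)₂₂ = −(αᵢ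 n_p/√(1 − αᵢ²))·R^{-T}. Then for every (κ, ε) ∈ ℝ³ × ℝ³, sup { mᵀκ + nᵀε : (m, n) ∈ ℝ³ × ℝ³, f₁(m, n) ≤ 1 and f₂(m, n) ≤ 1 } = min over all decompositions (κ, ε) = (κ₁, ε₁) + (κ₂, ε₂) in ℝ³ × ℝ³ of ( ‖T₁·(κ₁, ε₁)‖ + ‖T₂·(κ₂, ε₂)‖ ), where ‖·‖ is the Euclidean norm on ℝ⁶ and the minimum is attained. -/
open Matrix

local notation "WW" => (Fin 3 ⊕ Fin 3) → ℝ

noncomputable def eNorm (v : WW) : ℝ :=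
  ‖(WithLp.equiv 2 WW).symm v‖

lemma eNorm_eq (v : WW) : eNorm v = Real.sqrt (v ⬝ᵥ v) := by
  rw [eNorm, EuclideanSpace.norm_eq]
  congr 1
  simp [dotProduct, Real.norm_eq_abs, sq_abs, sq]

lemma dot_self_nonneg (v : WW) : 0 ≤ v ⬝ᵥ v :=
  Finset.sum_nonneg fun i _ => mul_self_nonneg (v i)

lemma eNorm_nonneg (v : WW) : 0 ≤ eNorm v := norm_nonneg _

lemma eNorm_zero : eNorm 0 = 0 := by
  rw [eNorm]; simp

lemma eNorm_smul (c : ℝ) (v : WW) : eNorm (c • v) = |c| * eNorm v := by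
  rw [eNorm, eNorm, show (WithLp.equiv 2 WW).symm (c • v) = c • (WithLp.equiv 2 WW).symm v from rfl,
    norm_smul, Real.norm_eq_abs]

lemma eNorm_add_le (u v : WW) : eNorm (u + v) ≤ eNorm u + eNorm v := by
  rw [eNorm, eNorm, eNorm,
    show (WithLp.equiv 2 WW).symm (u + v)
      = (WithLp.equiv 2 WW).symm u + (WithLp.equiv 2 WW).symm v from rfl]
  exact norm_add_le _ _

lemma dot_le_eNorm_mul (u v : WW) : u ⬝ᵥ v ≤ eNorm u * eNorm v := by
  rw [eNorm_eq, eNorm_eq]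
  have h := real_inner_le_norm ((WithLp.equiv 2 WW).symm u) ((WithLp.equiv 2 WW).symm v)
  rw [EuclideanSpace.norm_eq, EuclideanSpace.norm_eq] at h
  have e1 : (∑ i, ‖((WithLp.equiv 2 WW).symm u) i‖ ^ 2) = u ⬝ᵥ u := by
    simp [dotProduct, Real.norm_eq_abs, sq_abs, sq]
  have e2 : (∑ i, ‖((WithLp.equiv 2 WW).symm v) i‖ ^ 2) = v ⬝ᵥ v := by
    simp [dotProduct, Real.norm_eq_abs, sq_abs, sq]
  rw [e1, e2] at h
  refine le_trans (le_of_eq ?_) h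
  simp [PiLp.inner_apply, dotProduct, RCLike.inner_apply, mul_comm]

lemma piNorm_le_eNorm (v : WW) : ‖v‖ ≤ eNorm v := by
  refine (pi_norm_le_iff_of_nonneg (eNorm_nonneg v)).mpr fun i => ?_
  rw [eNorm_eq, Real.norm_eq_abs, ← Real.sqrt_sq_eq_abs]
  refine Real.sqrt_le_sqrt ?_
  rw [sq]
  exact Finset.single_le_sum (f := fun j => v j * v j)
    (fun j _ => mul_self_nonneg (v j)) (Finset.mem_univ i)

lemma dot_mulVec_left (M : Matrix (Fin 3 ⊕ Fin 3) (Fin 3 ⊕ Fin 3) ℝ) (y v : WW) :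
    (M *ᵥ y) ⬝ᵥ v = y ⬝ᵥ (Mᵀ *ᵥ v) := by
  rw [dotProduct_comm, dotProduct_mulVec, ← mulVec_transpose, dotProduct_comm]

lemma dot3_mulVec_left (M : Matrix (Fin 3) (Fin 3) ℝ) (y v : Fin 3 → ℝ) :
    (M *ᵥ y) ⬝ᵥ v = y ⬝ᵥ (Mᵀ *ᵥ v) := by
  rw [dotProduct_comm, dotProduct_mulVec, ← mulVec_transpose, dotProduct_comm]

theorem ilyushin_aux
    (T₁ T₂ : Matrix (Fin 3 ⊕ Fin 3) (Fin 3 ⊕ Fin 3) ℝ)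
    (s₁ s₂ : WW → WW)
    (h₁ : ∀ w x, (T₁ *ᵥ x) ⬝ᵥ s₁ w = w ⬝ᵥ x)
    (h₂ : ∀ w x, (T₂ *ᵥ x) ⬝ᵥ s₂ w = w ⬝ᵥ x)
    (z : WW) :
    IsLeast {s : ℝ | ∃ x₁ x₂ : WW, z = x₁ + x₂ ∧ s = eNorm (T₁ *ᵥ x₁) + eNorm (T₂ *ᵥ x₂)}
      (sSup {r : ℝ | ∃ w : WW, s₁ w ⬝ᵥ s₁ w ≤ 1 ∧ s₂ w ⬝ᵥ s₂ w ≤ 1 ∧ r = w ⬝ᵥ z}) := by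
  -- transpose identities and invertibility
  have hTt : ∀ (T : Matrix (Fin 3 ⊕ Fin 3) (Fin 3 ⊕ Fin 3) ℝ) (s : WW → WW),
      (∀ w x, (T *ᵥ x) ⬝ᵥ s w = w ⬝ᵥ x) → ∀ w, Tᵀ *ᵥ s w = w := by
    intro T s h w
    funext j
    have := h w (Pi.single j 1)
    rw [dot_mulVec_left] at this
    rw [single_dotProduct, dotProduct_single, one_mul, mul_one] at this
    exact this
  have hunit : ∀ (T : Matrix (Fin 3 ⊕ Fin 3) (Fin 3 ⊕ Fin 3) ℝ) (s : WW → WW),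
      (∀ w x, (T *ᵥ x) ⬝ᵥ s w = w ⬝ᵥ x) → IsUnit T.det := by
    intro T s h
    have hsurj : Function.Surjective (Tᵀ.mulVec) := fun w => ⟨s w, hTt T s h w⟩
    have h2 := Matrix.mulVec_surjective_iff_isUnit.mp hsurj
    rw [Matrix.isUnit_iff_isUnit_det, Matrix.det_transpose] at h2
    exact h2
  have hu₁ := hunit T₁ s₁ h₁
  have hu₂ := hunit T₂ s₂ h₂
  have hinv : ∀ (T : Matrix (Fin 3 ⊕ Fin 3) (Fin 3 ⊕ Fin 3) ℝ), IsUnit T.det →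
      ∀ y, T *ᵥ (T⁻¹ *ᵥ y) = y := by
    intro T hT y
    rw [Matrix.mulVec_mulVec, Matrix.mul_nonsing_inv _ hT, Matrix.one_mulVec]
  have hinv' : ∀ (T : Matrix (Fin 3 ⊕ Fin 3) (Fin 3 ⊕ Fin 3) ℝ), IsUnit T.det →
      ∀ y, T⁻¹ *ᵥ (T *ᵥ y) = y := by
    intro T hT y
    rw [Matrix.mulVec_mulVec, Matrix.nonsing_inv_mul _ hT, Matrix.one_mulVec]
  have hs0 : ∀ (T : Matrix (Fin 3 ⊕ Fin 3) (Fin 3 ⊕ Fin 3) ℝ) (s : WW → WW),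
      (∀ w x, (T *ᵥ x) ⬝ᵥ s w = w ⬝ᵥ x) → IsUnit T.det → s 0 = 0 := by
    intro T s h hT
    have h0 : Tᵀ *ᵥ s 0 = 0 := hTt T s h 0
    have hTt' : IsUnit (Tᵀ).det := by rwa [Matrix.det_transpose]
    have := hinv' Tᵀ hTt' (s 0)
    rw [h0, Matrix.mulVec_zero] at this
    exact this.symm
  set D : Set ℝ :=
    {s : ℝ | ∃ x₁ x₂ : WW, z = x₁ + x₂ ∧ s = eNorm (T₁ *ᵥ x₁) + eNorm (T₂ *ᵥ x₂)} with hD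
  set F : Set ℝ :=
    {r : ℝ | ∃ w : WW, s₁ w ⬝ᵥ s₁ w ≤ 1 ∧ s₂ w ⬝ᵥ s₂ w ≤ 1 ∧ r = w ⬝ᵥ z} with hFdef
  -- trivial members
  have hF0 : (0 : ℝ) ∈ F := by
    refine ⟨0, ?_, ?_, (zero_dotProduct z).symm⟩
    · rw [hs0 T₁ s₁ h₁ hu₁]; simp
    · rw [hs0 T₂ s₂ h₂ hu₂]; simp
  have hDz : eNorm (T₁ *ᵥ z) ∈ D := by
    refine ⟨z, 0, (add_zero z).symm, ?_⟩
    rw [Matrix.mulVec_zero, eNorm_zero, add_zero]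
  -- every feasible value is below every decomposition value
  have key : ∀ r ∈ F, ∀ s ∈ D, r ≤ s := by
    rintro r ⟨w, hw1, hw2, rfl⟩ s ⟨x₁, x₂, hzx, rfl⟩
    have sqle : ∀ q : WW, q ⬝ᵥ q ≤ 1 → eNorm q ≤ 1 := by
      intro q hq
      rw [eNorm_eq]
      calc Real.sqrt (q ⬝ᵥ q) ≤ Real.sqrt 1 := Real.sqrt_le_sqrt hq
      _ = 1 := Real.sqrt_one
    have e1 : w ⬝ᵥ x₁ ≤ eNorm (T₁ *ᵥ x₁) := by
      calc w ⬝ᵥ x₁ = (T₁ *ᵥ x₁) ⬝ᵥ s₁ w := (h₁ w x₁).symm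
      _ ≤ eNorm (T₁ *ᵥ x₁) * eNorm (s₁ w) := dot_le_eNorm_mul _ _
      _ ≤ eNorm (T₁ *ᵥ x₁) * 1 :=
          mul_le_mul_of_nonneg_left (sqle _ hw1) (eNorm_nonneg _)
      _ = eNorm (T₁ *ᵥ x₁) := mul_one _
    have e2 : w ⬝ᵥ x₂ ≤ eNorm (T₂ *ᵥ x₂) := by
      calc w ⬝ᵥ x₂ = (T₂ *ᵥ x₂) ⬝ᵥ s₂ w := (h₂ w x₂).symm
      _ ≤ eNorm (T₂ *ᵥ x₂) * eNorm (s₂ w) := dot_le_eNorm_mul _ _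
      _ ≤ eNorm (T₂ *ᵥ x₂) * 1 :=
          mul_le_mul_of_nonneg_left (sqle _ hw2) (eNorm_nonneg _)
      _ = eNorm (T₂ *ᵥ x₂) := mul_one _
    calc w ⬝ᵥ z = w ⬝ᵥ x₁ + w ⬝ᵥ x₂ := by rw [hzx, dotProduct_add]
    _ ≤ eNorm (T₁ *ᵥ x₁) + eNorm (T₂ *ᵥ x₂) := add_le_add e1 e2
  have hFbdd : BddAbove F := ⟨eNorm (T₁ *ᵥ z), fun r hr => key r hr _ hDz⟩
  -- continuity of the decomposition functional
  have contEN : ∀ (M : Matrix (Fin 3 ⊕ Fin 3) (Fin 3 ⊕ Fin 3) ℝ),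
      Continuous fun x : WW => eNorm (M *ᵥ x) := by
    intro M
    have hM : Continuous fun x : WW => M *ᵥ x := by
      have := LinearMap.continuous_of_finiteDimensional (M.mulVecLin)
      exact this
    have hdot : Continuous fun v : WW => Real.sqrt (v ⬝ᵥ v) := by
      refine Real.continuous_sqrt.comp ?_
      exact continuous_finset_sum _ fun i _ => (continuous_apply i).mul (continuous_apply i)
    simp only [eNorm_eq]
    exact hdot.comp hM
  have contφ : Continuous fun x₁ : WW => eNorm (T₁ *ᵥ x₁) + eNorm (T₂ *ᵥ (z - x₁)) :=
    (contEN T₁).add ((contEN T₂).comp (continuous_const.sub continuous_id))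
  -- coercivity
  have hcoer : ∃ C > (0:ℝ), ∀ x : WW, ‖x‖ ≤ C * eNorm (T₁ *ᵥ x) := by
    set L := LinearMap.toContinuousLinearMap ((T₁⁻¹).mulVecLin) with hL
    refine ⟨‖L‖ + 1, by positivity, fun x => ?_⟩
    have hx : T₁⁻¹ *ᵥ (T₁ *ᵥ x) = x := hinv' T₁ hu₁ x
    have hLx : L (T₁ *ᵥ x) = x := by
      simp only [hL, LinearMap.coe_toContinuousLinearMap', Matrix.mulVecLin_apply, hx]
    calc ‖x‖ = ‖L (T₁ *ᵥ x)‖ := by rw [hLx]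
    _ ≤ ‖L‖ * ‖T₁ *ᵥ x‖ := L.le_opNorm _
    _ ≤ (‖L‖ + 1) * eNorm (T₁ *ᵥ x) := by
        apply mul_le_mul (by linarith [norm_nonneg L]) (piNorm_le_eNorm _)
          (norm_nonneg _) (by positivity)
  obtain ⟨C, hC, hCle⟩ := hcoer
  -- attainment of the minimum over decompositions
  set φ : WW → ℝ := fun x₁ => eNorm (T₁ *ᵥ x₁) + eNorm (T₂ *ᵥ (z - x₁)) with hφ
  set ρ : ℝ := C * (φ z + 1) + ‖z‖ with hρ
  have hφz : φ z = eNorm (T₁ *ᵥ z) := by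
    simp only [hφ, sub_self, Matrix.mulVec_zero, eNorm_zero, add_zero]
  have hzball : z ∈ Metric.closedBall (0 : WW) ρ := by
    rw [Metric.mem_closedBall, dist_zero_right, hρ]
    have h1 : 0 ≤ C * (φ z + 1) := by
      apply mul_nonneg hC.le
      have := eNorm_nonneg (T₁ *ᵥ z); rw [← hφz] at this; linarith
    linarith
  obtain ⟨x₁s, hx₁mem, hminOn⟩ := (isCompact_closedBall (0:WW) ρ).exists_isMinOn
    ⟨z, hzball⟩ contφ.continuousOn
  have hmin : ∀ y ∈ Metric.closedBall (0:WW) ρ, φ x₁s ≤ φ y := fun y hy => hminOn hy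
  have hφnonneg : ∀ y, 0 ≤ φ y := fun y => add_nonneg (eNorm_nonneg _) (eNorm_nonneg _)
  have hglobal : ∀ y, φ x₁s ≤ φ y := by
    intro y
    by_cases hy : y ∈ Metric.closedBall (0:WW) ρ
    · exact hmin y hy
    · have hy' : ρ < ‖y‖ := by
        rw [Metric.mem_closedBall, dist_zero_right, not_le] at hy; exact hy
      have h1 : ‖y‖ ≤ C * eNorm (T₁ *ᵥ y) := hCle y
      have h2 : eNorm (T₁ *ᵥ y) ≤ φ y := by
        have := eNorm_nonneg (T₂ *ᵥ (z - y)); simp only [hφ]; linarith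
      have h3 : C * (φ z + 1) ≤ ρ := by rw [hρ]; linarith [norm_nonneg z]
      have h4 : C * (φ z + 1) < C * φ y := by
        calc C * (φ z + 1) ≤ ρ := h3
        _ < ‖y‖ := hy'
        _ ≤ C * eNorm (T₁ *ᵥ y) := h1
        _ ≤ C * φ y := mul_le_mul_of_nonneg_left h2 hC.le
      have h5 : φ z + 1 < φ y := lt_of_mul_lt_mul_left h4 hC.le
      linarith [hmin z hzball]
  have hmD : φ x₁s ∈ D := ⟨x₁s, z - x₁s, by abel, rfl⟩
  have hmleast : ∀ s ∈ D, φ x₁s ≤ s := by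
    rintro s ⟨x₁, x₂, hzx, rfl⟩
    have hx₂ : x₂ = z - x₁ := by rw [hzx]; abel
    rw [hx₂]
    exact hglobal x₁
  -- the inf-convolution functional
  set Dset : WW → Set ℝ := fun y =>
    {s : ℝ | ∃ x₁ x₂ : WW, y = x₁ + x₂ ∧ s = eNorm (T₁ *ᵥ x₁) + eNorm (T₂ *ᵥ x₂)} with hDset
  set N : WW → ℝ := fun y => sInf (Dset y) with hN
  have hDD : D = Dset z := rfl
  have hDset_ne : ∀ y, (Dset y).Nonempty := fun y =>
    ⟨_, y, 0, (add_zero y).symm, rfl⟩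
  have hDset_bdd : ∀ y, BddBelow (Dset y) := by
    intro y
    refine ⟨0, ?_⟩
    rintro s ⟨x₁, x₂, _, rfl⟩
    exact add_nonneg (eNorm_nonneg _) (eNorm_nonneg _)
  have hN_le : ∀ y s, s ∈ Dset y → N y ≤ s := fun y s hs => csInf_le (hDset_bdd y) hs
  have hN_nonneg : ∀ y, 0 ≤ N y := by
    intro y
    refine le_csInf (hDset_ne y) ?_
    rintro s ⟨x₁, x₂, _, rfl⟩
    exact add_nonneg (eNorm_nonneg _) (eNorm_nonneg _)
  have hNz : N z = φ x₁s := le_antisymm (hN_le _ _ hmD) (le_csInf (hDset_ne z) hmleast)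
  -- sublinearity of N
  have N_add : ∀ x y : WW, N (x + y) ≤ N x + N y := by
    intro x y
    have step : ∀ a ∈ Dset x, ∀ b ∈ Dset y, N (x + y) ≤ a + b := by
      rintro a ⟨p₁, p₂, hp, rfl⟩ b ⟨q₁, q₂, hq, rfl⟩
      refine le_trans (hN_le _ _ ⟨p₁ + q₁, p₂ + q₂, by rw [hp, hq]; abel, rfl⟩) ?_
      rw [Matrix.mulVec_add, Matrix.mulVec_add]
      have t1 := eNorm_add_le (T₁ *ᵥ p₁) (T₁ *ᵥ q₁)
      have t2 := eNorm_add_le (T₂ *ᵥ p₂) (T₂ *ᵥ q₂)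
      linarith
    have h1 : ∀ b ∈ Dset y, N (x + y) - b ≤ N x := by
      intro b hb
      refine le_csInf (hDset_ne x) fun a ha => ?_
      linarith [step a ha b hb]
    have h2 : N (x + y) - N x ≤ N y := by
      refine le_csInf (hDset_ne y) fun b hb => ?_
      linarith [h1 b hb]
    linarith
  have N_le1 : ∀ c : ℝ, 0 < c → ∀ x : WW, N (c • x) ≤ c * N x := by
    intro c hc x
    have step : ∀ a ∈ Dset x, N (c • x) ≤ c * a := by
      rintro a ⟨p₁, p₂, hp, rfl⟩
      have hval : eNorm (T₁ *ᵥ (c • p₁)) + eNorm (T₂ *ᵥ (c • p₂))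
          = c * (eNorm (T₁ *ᵥ p₁) + eNorm (T₂ *ᵥ p₂)) := by
        rw [Matrix.mulVec_smul, Matrix.mulVec_smul, eNorm_smul, eNorm_smul, abs_of_pos hc]
        ring
      calc N (c • x) ≤ eNorm (T₁ *ᵥ (c • p₁)) + eNorm (T₂ *ᵥ (c • p₂)) :=
            hN_le _ _ ⟨c • p₁, c • p₂, by rw [hp, smul_add], rfl⟩
      _ = c * (eNorm (T₁ *ᵥ p₁) + eNorm (T₂ *ᵥ p₂)) := hval
    have hdiv : N (c • x) / c ≤ N x := by
      refine le_csInf (hDset_ne x) fun a ha => ?_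
      rw [div_le_iff₀ hc]
      rcases ha with ⟨p₁, p₂, hp, rfl⟩
      calc N (c • x) ≤ c * (eNorm (T₁ *ᵥ p₁) + eNorm (T₂ *ᵥ p₂)) := step _ ⟨p₁, p₂, hp, rfl⟩
      _ = (eNorm (T₁ *ᵥ p₁) + eNorm (T₂ *ᵥ p₂)) * c := mul_comm _ _
    calc N (c • x) = c * (N (c • x) / c) := by field_simp
    _ ≤ c * N x := mul_le_mul_of_nonneg_left hdiv hc.le
  have N_hom : ∀ c : ℝ, 0 < c → ∀ x : WW, N (c • x) = c * N x := by
    intro c hc x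
    refine le_antisymm (N_le1 c hc x) ?_
    have h := N_le1 c⁻¹ (by positivity) (c • x)
    rw [smul_smul, inv_mul_cancel₀ hc.ne', one_smul] at h
    calc c * N x ≤ c * (c⁻¹ * N (c • x)) := mul_le_mul_of_nonneg_left h hc.le
    _ = N (c • x) := by field_simp
  by_cases hz0 : z = 0
  · have hFeq : F = {0} := by
      apply Set.eq_singleton_iff_unique_mem.mpr
      refine ⟨hF0, ?_⟩
      rintro r ⟨w, _, _, rfl⟩
      rw [hz0, dotProduct_zero]
    rw [hFeq, csSup_singleton]
    constructor
    · exact ⟨0, 0, by rw [hz0, add_zero],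
        by rw [Matrix.mulVec_zero, Matrix.mulVec_zero, eNorm_zero, add_zero]⟩
    · rintro s ⟨x₁, x₂, _, rfl⟩
      exact add_nonneg (eNorm_nonneg _) (eNorm_nonneg _)
  · set f₀ := LinearPMap.mkSpanSingleton (K := ℝ) (L := ℝ) (σ := RingHom.id ℝ) z (N z) hz0 with hf₀
    have hf : ∀ x : f₀.domain, f₀ x ≤ N x := by
      rintro ⟨x, hx⟩
      have hx' : x ∈ (Submodule.span ℝ {z} : Submodule ℝ WW) := hx
      rw [Submodule.mem_span_singleton] at hx'
      obtain ⟨t, ht⟩ := hx'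
      subst ht
      have happ : f₀ ⟨t • z, hx⟩ = t * N z := by
        have h0 := LinearPMap.mkSpanSingleton'_apply (σ := RingHom.id ℝ) z (N z)
          (fun c hc => (smul_eq_zero.1 hc).elim
            (fun hc => by rw [hc, RingHom.map_zero, zero_smul]) fun hx' => absurd hx' hz0) t hx
        simp only [smul_eq_mul, RingHom.id_apply] at h0
        exact h0
      rw [happ]
      show t * N z ≤ N (t • z)
      rcases lt_trichotomy t 0 with h | h | h
      · exact le_trans (mul_nonpos_iff.mpr (Or.inr ⟨h.le, hN_nonneg z⟩)) (hN_nonneg _)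
      · subst h
        rw [zero_mul, zero_smul]
        exact hN_nonneg 0
      · rw [N_hom t h z]
    obtain ⟨g, hg_eq, hg_le⟩ := exists_extension_of_le_sublinear f₀ N N_hom N_add hf
    have hzmem : z ∈ f₀.domain := Submodule.mem_span_singleton_self z
    have hgz : g z = N z := by
      have h1 := hg_eq ⟨z, hzmem⟩
      have h2 : f₀ ⟨z, hzmem⟩ = N z := LinearPMap.mkSpanSingleton_apply ℝ ℝ hz0 (N z)
      exact h1.trans h2
    set w : WW := fun j => g (Pi.single j 1) with hwdef
    have hgdot : ∀ x : WW, g x = w ⬝ᵥ x := by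
      intro x
      have hx : x = ∑ j : Fin 3 ⊕ Fin 3, x j • (Pi.single j 1 : WW) := by
        funext k
        simp [Finset.sum_apply, Pi.single_apply]
      conv_lhs => rw [hx]
      rw [map_sum]
      simp only [_root_.map_smul, smul_eq_mul, dotProduct, hwdef]
      exact Finset.sum_congr rfl fun j _ => mul_comm _ _
    have hNle₁ : ∀ x : WW, N x ≤ eNorm (T₁ *ᵥ x) := by
      intro x
      have := hN_le x _ ⟨x, 0, (add_zero x).symm, rfl⟩
      simpa [Matrix.mulVec_zero, eNorm_zero] using this
    have hNle₂ : ∀ x : WW, N x ≤ eNorm (T₂ *ᵥ x) := by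
      intro x
      have := hN_le x _ ⟨0, x, (zero_add x).symm, rfl⟩
      simpa [Matrix.mulVec_zero, eNorm_zero] using this
    have feas : ∀ (T : Matrix (Fin 3 ⊕ Fin 3) (Fin 3 ⊕ Fin 3) ℝ) (s : WW → WW),
        (∀ w' x, (T *ᵥ x) ⬝ᵥ s w' = w' ⬝ᵥ x) → IsUnit T.det →
        (∀ x, N x ≤ eNorm (T *ᵥ x)) → s w ⬝ᵥ s w ≤ 1 := by
      intro T s h hT hle
      set q := s w with hq
      set x := T⁻¹ *ᵥ q with hxdef
      have hTx : T *ᵥ x = q := hinv T hT q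
      have h1 : w ⬝ᵥ x = q ⬝ᵥ q := by rw [← h w x, hTx]
      have h2 : w ⬝ᵥ x ≤ eNorm (T *ᵥ x) :=
        le_trans (by rw [← hgdot]; exact hg_le x) (hle x)
      rw [h1, hTx, eNorm_eq] at h2
      have ht0 : 0 ≤ q ⬝ᵥ q := dot_self_nonneg q
      nlinarith [Real.sq_sqrt ht0, Real.sqrt_nonneg (q ⬝ᵥ q),
        sq_nonneg (Real.sqrt (q ⬝ᵥ q) - 1)]
    have hwF : (w ⬝ᵥ z) ∈ F := ⟨w, feas T₁ s₁ h₁ hu₁ hNle₁, feas T₂ s₂ h₂ hu₂ hNle₂, rfl⟩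
    have hSS : sSup F = φ x₁s := by
      refine le_antisymm (csSup_le ⟨0, hF0⟩ fun r hr => key r hr _ hmD) ?_
      calc φ x₁s = N z := hNz.symm
      _ = g z := hgz.symm
      _ = w ⬝ᵥ z := hgdot z
      _ ≤ sSup F := le_csSup hFbdd hwF
    rw [hSS]
    exact ⟨hmD, hmleast⟩


noncomputable def sfun (R : Matrix (Fin 3) (Fin 3) ℝ) (np mp a b : ℝ)
    (w : (Fin 3 ⊕ Fin 3) → ℝ) : (Fin 3 ⊕ Fin 3) → ℝ :=
  Sum.elim ((1/np) • (R *ᵥ (w ∘ Sum.inr)) + (a / mp) • (R *ᵥ (w ∘ Sum.inl)))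
    ((b / mp) • (R *ᵥ (w ∘ Sum.inl)))

/-- Dissipation power area-density of the (two-branch) approximate Ilyushin
criterion: the supremum of `mᵀκ + nᵀε` over `{f₁ ≤ 1} ∩ {f₂ ≤ 1}` equals the
minimum, over decompositions `(κ, ε) = (κ₁, ε₁) + (κ₂, ε₂)`, of
`‖T₁·(κ₁, ε₁)‖ + ‖T₂·(κ₂, ε₂)‖`, and this minimum is attained. -/
theorem ilyushin_dissipation_infimal_convolution
    (P R : Matrix (Fin 3) (Fin 3) ℝ)
    (hP : P = !![1, -1/2, 0; -1/2, 1, 0; 0, 0, 3])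
    (hR : R = !![Real.sqrt 3 / 2, 0, 0; -1/2, 1, 0; 0, 0, Real.sqrt 3])
    (np mp : ℝ) (hnp : 0 < np) (hmp : 0 < mp)
    (α : ℕ → ℝ) (hα : ∀ i, α i = (-1 : ℝ) ^ i / (2 * Real.sqrt 3))
    (f : ℕ → (Fin 3 → ℝ) → (Fin 3 → ℝ) → ℝ)
    (hf : ∀ i m n, f i m n
        = n ⬝ᵥ P.mulVec n / np ^ 2 + m ⬝ᵥ P.mulVec m / mp ^ 2
          + ((-1 : ℝ) ^ i / Real.sqrt 3) * (m ⬝ᵥ P.mulVec n) / (np * mp))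
    (T : ℕ → Matrix (Fin 3 ⊕ Fin 3) (Fin 3 ⊕ Fin 3) ℝ)
    (hT : ∀ i, T i = Matrix.fromBlocks
        (0 : Matrix (Fin 3) (Fin 3) ℝ) (np • (Rᵀ)⁻¹)
        ((mp / Real.sqrt (1 - (α i) ^ 2)) • (Rᵀ)⁻¹)
        (-((α i * np / Real.sqrt (1 - (α i) ^ 2)) • (Rᵀ)⁻¹)))
    (κ ε : Fin 3 → ℝ) :
    IsLeast
      {s : ℝ | ∃ κ₁ ε₁ κ₂ ε₂ : Fin 3 → ℝ, κ = κ₁ + κ₂ ∧ ε = ε₁ + ε₂ ∧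
        s = ‖(WithLp.equiv 2 ((Fin 3 ⊕ Fin 3) → ℝ)).symm
              ((T 1).mulVec (Sum.elim κ₁ ε₁))‖
          + ‖(WithLp.equiv 2 ((Fin 3 ⊕ Fin 3) → ℝ)).symm
              ((T 2).mulVec (Sum.elim κ₂ ε₂))‖}
      (sSup {r : ℝ | ∃ m n : Fin 3 → ℝ,
        f 1 m n ≤ 1 ∧ f 2 m n ≤ 1 ∧ r = m ⬝ᵥ κ + n ⬝ᵥ ε}) := by
  have h3 : Real.sqrt 3 * Real.sqrt 3 = 3 := Real.mul_self_sqrt (by norm_num)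
  have h3pos : (0:ℝ) < Real.sqrt 3 := Real.sqrt_pos.mpr (by norm_num)
  have ha2 : ∀ i, (α i) ^ 2 = 1 / 12 := by
    intro i
    rw [hα, div_pow, mul_pow,
      show ((-1:ℝ)^i)^2 = 1 by rw [← pow_mul, mul_comm, pow_mul, neg_one_sq, one_pow],
      Real.sq_sqrt (by norm_num : (0:ℝ) ≤ 3)]
    norm_num
  have hβpos : ∀ i, 0 < Real.sqrt (1 - α i ^ 2) := fun i =>
    Real.sqrt_pos.mpr (by rw [ha2 i]; norm_num)
  have haa : ∀ i, α i * α i + Real.sqrt (1 - α i ^ 2) * Real.sqrt (1 - α i ^ 2) = 1 := by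
    intro i
    have h2 : Real.sqrt (1 - α i ^ 2) * Real.sqrt (1 - α i ^ 2) = 1 - α i ^ 2 :=
      Real.mul_self_sqrt (by rw [ha2 i]; norm_num)
    have h1 : α i ^ 2 = α i * α i := sq (α i)
    rw [h2, ← h1]
    ring
  have h2a : ∀ i, (-1:ℝ) ^ i / Real.sqrt 3 = 2 * α i := by
    intro i
    rw [hα i]
    field_simp
  have hdetval : R.det = 3/2 := by
    rw [hR, Matrix.det_fin_three]
    simp
    nlinarith [h3]
  have hdet : IsUnit R.det := by rw [hdetval]; norm_num
  have hRtR : Rᵀ * R = P := by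
    rw [hR, hP]
    rw [show (!![Real.sqrt 3 / 2, 0, 0; -1/2, 1, 0; 0, 0, Real.sqrt 3] : Matrix (Fin 3) (Fin 3) ℝ)ᵀ
        = !![Real.sqrt 3 / 2, -1/2, 0; 0, 1, 0; 0, 0, Real.sqrt 3] by
      ext i j; fin_cases i <;> fin_cases j <;> rfl]
    rw [Matrix.mul_fin_three]
    norm_num [show Real.sqrt 3/2*(Real.sqrt 3/2) = (3:ℝ)/4 from by nlinarith [h3]]
  have hQR : ∀ (y x : Fin 3 → ℝ), ((Rᵀ)⁻¹ *ᵥ y) ⬝ᵥ (R *ᵥ x) = y ⬝ᵥ x := by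
    intro y x
    rw [dotProduct_comm, dotProduct_mulVec, ← mulVec_transpose, dotProduct_comm,
      Matrix.transpose_nonsing_inv, Matrix.transpose_transpose, Matrix.mulVec_mulVec,
      Matrix.nonsing_inv_mul R hdet, Matrix.one_mulVec]
  have hRP : ∀ (x y : Fin 3 → ℝ), (R *ᵥ x) ⬝ᵥ (R *ᵥ y) = x ⬝ᵥ (P *ᵥ y) := by
    intro x y
    rw [dotProduct_comm, dotProduct_mulVec, ← mulVec_transpose, dotProduct_comm,
      Matrix.mulVec_mulVec, hRtR]
  have hPsym : ∀ (x y : Fin 3 → ℝ), x ⬝ᵥ (P *ᵥ y) = y ⬝ᵥ (P *ᵥ x) := by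
    intro x y
    rw [← hRP x y, dotProduct_comm, hRP y x]
  have hpair : ∀ (i : ℕ) (w x : (Fin 3 ⊕ Fin 3) → ℝ),
      ((T i) *ᵥ x) ⬝ᵥ sfun R np mp (α i) (Real.sqrt (1 - α i ^ 2)) w = w ⬝ᵥ x := by
    intro i w x
    have hx : x = Sum.elim (x ∘ Sum.inl) (x ∘ Sum.inr) := (Sum.elim_comp_inl_inr x).symm
    rw [hT i, sfun]
    conv_lhs => rw [hx]
    conv_rhs => rw [hx]
    rw [Matrix.fromBlocks_mulVec, dotProduct_block, dotProduct_block]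
    have c1 : (w ∘ Sum.inl) ⬝ᵥ (x ∘ Sum.inl) = (x ∘ Sum.inl) ⬝ᵥ (w ∘ Sum.inl) :=
      dotProduct_comm _ _
    have c2 : (w ∘ Sum.inr) ⬝ᵥ (x ∘ Sum.inr) = (x ∘ Sum.inr) ⬝ᵥ (w ∘ Sum.inr) :=
      dotProduct_comm _ _
    simp only [Sum.elim_comp_inl, Sum.elim_comp_inr, Matrix.zero_mulVec, zero_add,
      Matrix.smul_mulVec, Matrix.neg_mulVec, dotProduct_add, add_dotProduct,
      dotProduct_smul, smul_dotProduct, neg_dotProduct, smul_eq_mul,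
      hQR, c1, c2]
    field_simp [hnp.ne', hmp.ne', (hβpos i).ne']
    ring
  have hfe : ∀ (i : ℕ) (m n : Fin 3 → ℝ), f i m n
      = sfun R np mp (α i) (Real.sqrt (1 - α i ^ 2)) (Sum.elim m n)
        ⬝ᵥ sfun R np mp (α i) (Real.sqrt (1 - α i ^ 2)) (Sum.elim m n) := by
    intro i m n
    rw [hf, sfun, dotProduct_block]
    simp only [Sum.elim_comp_inl, Sum.elim_comp_inr,
      dotProduct_add, add_dotProduct, dotProduct_smul,
      smul_dotProduct, smul_eq_mul, hRP]
    rw [hPsym n m, h2a i]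
    linear_combination (-(m ⬝ᵥ (P *ᵥ m)) / mp^2) * haa i
  have hDeq : {s : ℝ | ∃ x₁ x₂ : (Fin 3 ⊕ Fin 3) → ℝ, Sum.elim κ ε = x₁ + x₂ ∧
        s = eNorm ((T 1) *ᵥ x₁) + eNorm ((T 2) *ᵥ x₂)}
      = {s : ℝ | ∃ κ₁ ε₁ κ₂ ε₂ : Fin 3 → ℝ, κ = κ₁ + κ₂ ∧ ε = ε₁ + ε₂ ∧
        s = ‖(WithLp.equiv 2 ((Fin 3 ⊕ Fin 3) → ℝ)).symm
              ((T 1).mulVec (Sum.elim κ₁ ε₁))‖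
          + ‖(WithLp.equiv 2 ((Fin 3 ⊕ Fin 3) → ℝ)).symm
              ((T 2).mulVec (Sum.elim κ₂ ε₂))‖} := by
    ext s
    constructor
    · rintro ⟨x₁, x₂, hx, rfl⟩
      refine ⟨x₁ ∘ Sum.inl, x₁ ∘ Sum.inr, x₂ ∘ Sum.inl, x₂ ∘ Sum.inr, ?_, ?_, ?_⟩
      · funext j; exact congrFun hx (Sum.inl j)
      · funext j; exact congrFun hx (Sum.inr j)
      · rw [Sum.elim_comp_inl_inr x₁, Sum.elim_comp_inl_inr x₂]; rfl
    · rintro ⟨κ₁, ε₁, κ₂, ε₂, hk, he, rfl⟩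
      refine ⟨Sum.elim κ₁ ε₁, Sum.elim κ₂ ε₂, ?_, rfl⟩
      funext j
      cases j with
      | inl j => simp [hk, Pi.add_apply]
      | inr j => simp [he, Pi.add_apply]
  have hFeq : {r : ℝ | ∃ w : (Fin 3 ⊕ Fin 3) → ℝ,
        sfun R np mp (α 1) (Real.sqrt (1 - α 1 ^ 2)) w
          ⬝ᵥ sfun R np mp (α 1) (Real.sqrt (1 - α 1 ^ 2)) w ≤ 1 ∧
        sfun R np mp (α 2) (Real.sqrt (1 - α 2 ^ 2)) w
          ⬝ᵥ sfun R np mp (α 2) (Real.sqrt (1 - α 2 ^ 2)) w ≤ 1 ∧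
        r = w ⬝ᵥ Sum.elim κ ε}
      = {r : ℝ | ∃ m n : Fin 3 → ℝ, f 1 m n ≤ 1 ∧ f 2 m n ≤ 1 ∧ r = m ⬝ᵥ κ + n ⬝ᵥ ε} := by
    ext r
    constructor
    · rintro ⟨w, hw1, hw2, rfl⟩
      refine ⟨w ∘ Sum.inl, w ∘ Sum.inr, ?_, ?_, ?_⟩
      · rw [hfe 1]; rwa [Sum.elim_comp_inl_inr w]
      · rw [hfe 2]; rwa [Sum.elim_comp_inl_inr w]
      · rw [dotProduct_block w, Sum.elim_comp_inl, Sum.elim_comp_inr]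
    · rintro ⟨m, n, h1, h2, rfl⟩
      refine ⟨Sum.elim m n, ?_, ?_, ?_⟩
      · rw [← hfe 1]; exact h1
      · rw [← hfe 2]; exact h2
      · simp only [dotProduct_block (Sum.elim m n), Sum.elim_comp_inl, Sum.elim_comp_inr]
  have main := ilyushin_aux (T 1) (T 2)
    (sfun R np mp (α 1) (Real.sqrt (1 - α 1 ^ 2)))
    (sfun R np mp (α 2) (Real.sqrt (1 - α 2 ^ 2)))
    (hpair 1) (hpair 2) (Sum.elim κ ε)
  rw [hDeq, hFeq] at main
  exact main
end
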